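/- Let (ζ′_k)_{k≥1} be i.i.d. nonnegative real random variables with 0 < E(ζ′₁) < ∞ and E(|ζ′₁ − E(ζ′₁)|^β) < ∞ for some β ≥ 2. Then there exists a constant C_G > 0 (depending only on β and the law of ζ′₁) such that for every n ≥ 1 and every b ≥ 2·n·E(ζ′₁): P( Σ_{k=1}^n ζ′_k > b ) ≤ C_G·n·b^{−β}. -/

import Mathlib

open MeasureTheory ProbabilityTheory Filter Set

noncomputable section

/-- A standard one-dimensional Brownian motion started at `0`, parametrized by `ℝ`
(only its restriction to nonnegative times is constrained). -/
def IsStandardBM {Ω : Type*} [MeasurableSpace Ω] (P : Measure Ω) (B : ℝ → Ω → ℝ) : Prop :=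
  (∀ t : ℝ, Measurable (B t)) ∧
  (∀ ω, B 0 ω = 0) ∧
  (∀ ω, Continuous fun t => B t ω) ∧
  (∀ (n : ℕ) (t : ℕ → ℝ), Monotone t → 0 ≤ t 0 →
    iIndepFun
      (fun i : Fin n => fun ω => B (t (i + 1)) ω - B (t i) ω) P) ∧
  (∀ s t : ℝ, 0 ≤ s → s ≤ t →
    P.map (fun ω => B t ω - B s ω) = gaussianReal 0 (Real.toNNReal (t - s)))

/-- A random walk in a time-dependent i.i.d. random environment.  `Ωe` is the sample
space of environments, `Ωq` the quenched sample space. -/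
structure RWre (Ωe Ωq : Type*) [MeasurableSpace Ωe] [MeasurableSpace Ωq] where
  /-- law of the environment -/
  Pe : Measure Ωe
  probPe : IsProbabilityMeasure Pe
  /-- quenched law, given the environment -/
  Pq : Ωe → Measure Ωq
  probPq : ∀ ωe, IsProbabilityMeasure (Pq ωe)
  /-- the environment: a sequence of random probability measures on `ℝ` -/
  env : ℕ → Ωe → Measure ℝ
  /-- the steps of the walk -/
  X : ℕ → Ωq → ℝ
  measX : ∀ n, Measurable (X n)
  measEnv : ∀ n, Measurable (env n)
  probEnv : ∀ n ωe, IsProbabilityMeasure (env n ωe)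
  quenchedLaw : ∀ n ωe, (Pq ωe).map (X n) = env n ωe
  quenchedIndep : ∀ ωe, iIndepFun X (Pq ωe)
  envIndep : iIndepFun env Pe
  envIdent : ∀ n, Pe.map (env n) = Pe.map (env 0)

namespace RWre

variable {Ωe Ωq : Type*} [MeasurableSpace Ωe] [MeasurableSpace Ωq] (R : RWre Ωe Ωq)

/-- the walk: `S n = X 1 + ⋯ + X n` (indexing steps from `0`: `S 1 = X 0` is the paper's `S₁`). -/
def S (n : ℕ) (ωq : Ωq) : ℝ := ∑ i ∈ Finset.range n, R.X i ωq

/-- quenched mean `Mₙ = E_μ Sₙ` -/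
def M (n : ℕ) (ωe : Ωe) : ℝ := ∫ ωq, R.S n ωq ∂(R.Pq ωe)

/-- the centered walk `Uₙ = Sₙ - Mₙ` -/
def U (n : ℕ) (ωe : Ωe) (ωq : Ωq) : ℝ := R.S n ωq - R.M n ωe

/-- quenched variance `ηₙ = E_μ Uₙ²` -/
def eta (n : ℕ) (ωe : Ωe) : ℝ := ∫ ωq, (R.U n ωe ωq) ^ 2 ∂(R.Pq ωe)

/-- `ζₙ = ∑_{k=1}^n E_μ |U_k - U_{k-1}|^α` -/
def zeta (α : ℝ) (n : ℕ) (ωe : Ωe) : ℝ :=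
  ∑ k ∈ Finset.range n, ∫ ωq, |R.U (k + 1) ωe ωq - R.U k ωe ωq| ^ α ∂(R.Pq ωe)

/-- `σ = (E M₁²)^{1/2}` -/
def sigma : ℝ := Real.sqrt (∫ ωe, (R.M 1 ωe) ^ 2 ∂(R.Pe))

end RWre

/-- The broken line through the points `(k, g k)`, `k ∈ ℕ`, evaluated at `s ≥ 0`. -/
def brokenLine (g : ℕ → ℝ) (s : ℝ) : ℝ :=
  g ⌊s⌋₊ + (s - ⌊s⌋₊) * (g (⌊s⌋₊ + 1) - g ⌊s⌋₊)


lemma aux_one_sub_mul_exp_le (u : ℝ) : (1 - u) * Real.exp u ≤ 1 := by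
  have h := Real.add_one_le_exp (-u)
  have h2 : (1 - u) * Real.exp u ≤ Real.exp (-u) * Real.exp u := by
    apply mul_le_mul_of_nonneg_right _ (Real.exp_pos u).le
    linarith
  rwa [← Real.exp_add, neg_add_cancel, Real.exp_zero] at h2

lemma aux_L2 {u : ℝ} (hu : 0 ≤ u) :
    2 * (Real.exp u - 1 - u) ≤ u * (Real.exp u - 1) := by
  set f : ℝ → ℝ := fun x => x * Real.exp x - 2 * Real.exp x + x + 2 with hf
  have hderiv : ∀ x : ℝ, HasDerivAt f ((x - 1) * Real.exp x + 1) x := by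
    intro x
    have h1 : HasDerivAt (fun x : ℝ => x * Real.exp x)
        (1 * Real.exp x + x * Real.exp x) x :=
      (hasDerivAt_id x).mul (Real.hasDerivAt_exp x)
    have h2 : HasDerivAt (fun x : ℝ => 2 * Real.exp x) (2 * Real.exp x) x :=
      (Real.hasDerivAt_exp x).const_mul 2
    have := ((h1.sub h2).add (hasDerivAt_id x)).add_const 2
    refine this.congr_deriv ?_
    ring
  have hmono : Monotone f := by
    apply monotone_of_deriv_nonneg
    · exact fun x => (hderiv x).differentiableAt
    · intro x
      rw [(hderiv x).deriv]
      nlinarith [aux_one_sub_mul_exp_le x, Real.exp_pos x]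
  have h0 : f 0 ≤ f u := hmono hu
  simp only [hf] at h0
  simp only [Real.exp_zero] at h0
  nlinarith [h0]

lemma aux_G {u w : ℝ} (hu : 0 ≤ u) (huw : u ≤ w) :
    w * (Real.exp u - 1) ≤ u * (Real.exp w - 1) := by
  set G : ℝ → ℝ := fun x => u * Real.exp x - u - x * (Real.exp u - 1) with hG
  have hderiv : ∀ x : ℝ, HasDerivAt G (u * Real.exp x - (Real.exp u - 1)) x := by
    intro x
    have h1 : HasDerivAt (fun x : ℝ => u * Real.exp x) (u * Real.exp x) x :=
      (Real.hasDerivAt_exp x).const_mul u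
    have := (h1.sub_const u).sub ((hasDerivAt_id x).mul_const (Real.exp u - 1))
    refine this.congr_deriv ?_
    ring
  have hmono : MonotoneOn G (Set.Ici u) := by
    apply monotoneOn_of_deriv_nonneg (convex_Ici u)
    · exact (Continuous.continuousOn (by continuity))
    · intro x hx
      exact (hderiv x).differentiableAt.differentiableWithinAt
    · intro x hx
      rw [(hderiv x).deriv]
      simp only [interior_Ici, Set.mem_Ioi] at hx
      have h1 : u * Real.exp u ≤ u * Real.exp x :=
        mul_le_mul_of_nonneg_left (Real.exp_le_exp.mpr hx.le) hu
      nlinarith [aux_one_sub_mul_exp_le u]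
  have h0 : G u ≤ G w := hmono (Set.self_mem_Ici) huw huw
  simp only [hG] at h0
  nlinarith [h0]

lemma aux_bennett {u w : ℝ} (hu : 0 ≤ u) (huw : u ≤ w) :
    w ^ 2 * (Real.exp u - 1 - u) ≤ u ^ 2 * (Real.exp w - 1 - w) := by
  set F : ℝ → ℝ := fun x => u ^ 2 * (Real.exp x - 1 - x) - x ^ 2 * (Real.exp u - 1 - u)
    with hF
  have hderiv : ∀ x : ℝ, HasDerivAt F
      (u ^ 2 * (Real.exp x - 1) - 2 * x * (Real.exp u - 1 - u)) x := by
    intro x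
    have h1 : HasDerivAt (fun x : ℝ => Real.exp x - 1 - x) (Real.exp x - 1) x := by
      have := ((Real.hasDerivAt_exp x).sub_const 1).sub (hasDerivAt_id x)
      exact this
    have h2 : HasDerivAt (fun x : ℝ => x ^ 2) (2 * x) x := by
      simpa using (hasDerivAt_pow 2 x)
    exact (h1.const_mul (u ^ 2)).sub (h2.mul_const (Real.exp u - 1 - u))
  have hmono : MonotoneOn F (Set.Ici u) := by
    apply monotoneOn_of_deriv_nonneg (convex_Ici u)
    · exact (Continuous.continuousOn (by continuity))
    · intro x hx
      exact (hderiv x).differentiableAt.differentiableWithinAt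
    · intro x hx
      rw [(hderiv x).deriv]
      simp only [interior_Ici, Set.mem_Ioi] at hx
      have hx0 : 0 ≤ x := hu.trans hx.le
      have hL2 : 2 * (Real.exp u - 1 - u) ≤ u * (Real.exp u - 1) := aux_L2 hu
      have hG : x * (Real.exp u - 1) ≤ u * (Real.exp x - 1) := aux_G hu hx.le
      nlinarith [Real.exp_pos u, Real.add_one_le_exp u, Real.exp_le_exp.mpr hx.le]
  have h0 : F u ≤ F w := hmono (Set.self_mem_Ici) huw huw
  simp only [hF] at h0
  nlinarith [h0]

lemma aux_exp_quad {t x y : ℝ} (ht : 0 ≤ t) (hx : 0 ≤ x) (hxy : x ≤ y) :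
    Real.exp (t * x) ≤ 1 + t * x + (x ^ 2 / y ^ 2) * (Real.exp (t * y) - 1 - t * y) := by
  rcases eq_or_lt_of_le (hx.trans hxy) with hy | hy
  · have hx0 : x = 0 := le_antisymm (hxy.trans_eq hy.symm) hx
    simp [hx0, ← hy]
  rcases eq_or_lt_of_le ht with ht0 | ht0
  · rw [← ht0]
    have hK : 0 ≤ Real.exp (0 * y) - 1 - 0 * y := by simp
    have : 0 ≤ (x ^ 2 / y ^ 2) * (Real.exp (0 * y) - 1 - 0 * y) := by positivity
    simpa using this
  have key := aux_bennett (mul_nonneg ht hx) (mul_le_mul_of_nonneg_left hxy ht)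
  have hty : 0 < (t * y) ^ 2 := by positivity
  rw [div_mul_eq_mul_div, ← sub_nonneg]
  have h2 : (t * x) ^ 2 * (Real.exp (t * y) - 1 - t * y) / (t * y) ^ 2
      = x ^ 2 * (Real.exp (t * y) - 1 - t * y) / y ^ 2 := by
    field_simp
  have h3 : Real.exp (t * x) - 1 - t * x
      ≤ (t * x) ^ 2 * (Real.exp (t * y) - 1 - t * y) / (t * y) ^ 2 := by
    rw [le_div_iff₀ hty]
    nlinarith [key]
  rw [h2] at h3
  linarith

set_option maxHeartbeats 2000000 in
/-- A tail bound for sums of i.i.d. nonnegative random variables with finite centered `β`-th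
moment: for `b ≥ 2 n E ζ'₁`, `P(Σ_{k=1}^n ζ'_k > b) ≤ C_G n b^{-β}`. -/
theorem iid_nonneg_sum_tail
    {Ω : Type*} [MeasurableSpace Ω] (P : Measure Ω) (hP : IsProbabilityMeasure P)
    (ζ : ℕ → Ω → ℝ) (hmeas : ∀ k, Measurable (ζ k))
    (hindep : iIndepFun ζ P)
    (hident : ∀ k, P.map (ζ k) = P.map (ζ 0))
    (hnonneg : ∀ k ω, 0 ≤ ζ k ω)
    (hmean_pos : 0 < ∫ ω, ζ 0 ω ∂P)
    (hmean_fin : Integrable (ζ 0) P)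
    (β : ℝ) (hβ : 2 ≤ β)
    (hmom : Integrable (fun ω => |ζ 0 ω - ∫ ω', ζ 0 ω' ∂P| ^ β) P) :
    ∃ CG > (0:ℝ), ∀ n : ℕ, 1 ≤ n → ∀ b : ℝ, 2 * n * (∫ ω, ζ 0 ω ∂P) ≤ b →
      P {ω | b < ∑ k ∈ Finset.range n, ζ k ω} ≤ ENNReal.ofReal (CG * n * b ^ (-β)) := by
  have hPP : IsProbabilityMeasure P := hP
  set m := ∫ ω, ζ 0 ω ∂P with hm_def
  set D := ∫ ω, |ζ 0 ω - m| ^ β ∂P with hD_def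
  have hβ0 : (0:ℝ) < β := by linarith
  have hm0 : 0 < m := hmean_pos
  have hD0 : 0 ≤ D := integral_nonneg fun ω => Real.rpow_nonneg (abs_nonneg _) β
  -- integrability of squares
  have hIc : Integrable (fun ω => (ζ 0 ω - m) ^ 2) P := by
    refine (hmom.add (integrable_const 1)).mono'
      (((hmeas 0).sub measurable_const).pow_const 2).aestronglyMeasurable
      (ae_of_all _ fun ω => ?_)
    rw [Real.norm_eq_abs, abs_of_nonneg (sq_nonneg _)]
    simp only [Pi.add_apply]
    rcases le_or_gt (|ζ 0 ω - m|) 1 with h | h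
    · have h2 : (ζ 0 ω - m) ^ 2 ≤ 1 := by
        rw [← sq_abs]; nlinarith [abs_nonneg (ζ 0 ω - m)]
      have h3 := Real.rpow_nonneg (abs_nonneg (ζ 0 ω - m)) β
      linarith
    · have h2 : |ζ 0 ω - m| ^ (2:ℝ) ≤ |ζ 0 ω - m| ^ β :=
        Real.rpow_le_rpow_of_exponent_le h.le hβ
      rw [show ((2:ℝ)) = ((2:ℕ):ℝ) by norm_num, Real.rpow_natCast, sq_abs] at h2
      linarith
  have hIsq : Integrable (fun ω => (ζ 0 ω) ^ 2) P := by
    have hfun : (fun ω => (ζ 0 ω) ^ 2)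
        = fun ω => ((ζ 0 ω - m) ^ 2 + (2 * m) * (ζ 0 ω - m)) + m ^ 2 := by
      funext ω; ring
    rw [hfun]
    exact (hIc.add ((hmean_fin.sub (integrable_const m)).const_mul (2 * m))).add
      (integrable_const _)
  set v := ∫ ω, (ζ 0 ω) ^ 2 ∂P with hv_def
  have hv0 : 0 ≤ v := integral_nonneg fun ω => sq_nonneg _
  -- Markov
  have hMarkov : ∀ a : ℝ, 0 < a → (P {ω | a ≤ |ζ 0 ω - m|}).toReal ≤ D / a ^ β := by
    intro a ha
    have hsub : {ω | a ≤ |ζ 0 ω - m|} ⊆ {ω | a ^ β ≤ |ζ 0 ω - m| ^ β} := fun ω h =>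
      Real.rpow_le_rpow ha.le h hβ0.le
    have h1 := mul_meas_ge_le_integral_of_nonneg
      (ae_of_all _ fun ω => Real.rpow_nonneg (abs_nonneg (ζ 0 ω - m)) β) hmom (a ^ β)
    have haβ : 0 < a ^ β := Real.rpow_pos_of_pos ha β
    have h2 : (P {ω | a ≤ |ζ 0 ω - m|}).toReal
        ≤ (P {ω | a ^ β ≤ |ζ 0 ω - m| ^ β}).toReal :=
      ENNReal.toReal_mono (measure_ne_top _ _) (measure_mono hsub)
    rw [le_div_iff₀ haβ]
    rw [measureReal_def] at h1
    have h3 := mul_le_mul_of_nonneg_right h2 haβ.le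
    have h4 : (P {ω | a ^ β ≤ |ζ 0 ω - m| ^ β}).toReal * a ^ β
        = a ^ β * (P {ω | a ^ β ≤ |ζ 0 ω - m| ^ β}).toReal := by ring
    linarith
  -- identical tails
  have hTail : ∀ (k : ℕ) (c : ℝ), P {ω | c < ζ k ω} = P {ω | c < ζ 0 ω} := by
    intro k c
    have h1 : {ω | c < ζ k ω} = ζ k ⁻¹' Set.Ioi c := rfl
    have h2 : {ω | c < ζ 0 ω} = ζ 0 ⁻¹' Set.Ioi c := rfl
    rw [h1, h2, ← Measure.map_apply (hmeas k) measurableSet_Ioi,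
      ← Measure.map_apply (hmeas 0) measurableSet_Ioi, hident k]
  refine ⟨1 + D * (4 * β) ^ β + Real.exp (2 * β ^ 2 * v / m), ?_, ?_⟩
  · have h1 : 0 ≤ D * (4 * β) ^ β :=
      mul_nonneg hD0 (Real.rpow_nonneg (by positivity) β)
    have h2 := Real.exp_pos (2 * β ^ 2 * v / m)
    linarith
  intro n hn b hb
  have hn1 : (1:ℝ) ≤ (n:ℝ) := by exact_mod_cast hn
  have hb0 : 0 < b := lt_of_lt_of_le (by positivity) hb
  have hbneg0 : (0:ℝ) ≤ b ^ (-β) := Real.rpow_nonneg hb0.le _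
  have hnm : (n:ℝ) * m ≤ b / 2 := by linarith
  set B4 := b / (4 * β) with hB4_def
  have hB4pos : 0 < B4 := by rw [hB4_def]; positivity
  have hKey : ∀ c : ℝ, m + B4 ≤ c → ∀ k : ℕ,
      P {ω | c < ζ k ω} ≤ ENNReal.ofReal (D / B4 ^ β) := by
    intro c hc k
    rw [hTail k c]
    have hsub : {ω | c < ζ 0 ω} ⊆ {ω | B4 ≤ |ζ 0 ω - m|} := by
      intro ω h
      simp only [Set.mem_setOf_eq] at h ⊢
      have h1 : B4 ≤ ζ 0 ω - m := by linarith
      exact h1.trans (le_abs_self _)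
    calc P {ω | c < ζ 0 ω} ≤ P {ω | B4 ≤ |ζ 0 ω - m|} := measure_mono hsub
      _ = ENNReal.ofReal ((P {ω | B4 ≤ |ζ 0 ω - m|}).toReal) :=
          (ENNReal.ofReal_toReal (measure_ne_top _ _)).symm
      _ ≤ ENNReal.ofReal (D / B4 ^ β) := ENNReal.ofReal_le_ofReal (hMarkov B4 hB4pos)
  have hDb : D / B4 ^ β = D * (4 * β) ^ β * b ^ (-β) := by
    rw [hB4_def, Real.div_rpow hb0.le (by positivity), div_div_eq_mul_div,
      Real.rpow_neg hb0.le, div_eq_mul_inv]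
  rcases le_or_gt b 1 with hb1 | hb1
  · -- trivial case
    have hbig : 1 ≤ b ^ (-β) :=
      Real.one_le_rpow_of_pos_of_le_one_of_nonpos hb0 hb1 (by linarith)
    have h1 : (1:ℝ) ≤ (1 + D * (4 * β) ^ β + Real.exp (2 * β ^ 2 * v / m)) * n * b ^ (-β) := by
      have h2 : 0 ≤ D * (4 * β) ^ β := mul_nonneg hD0 (Real.rpow_nonneg (by positivity) β)
      have h3 := Real.exp_pos (2 * β ^ 2 * v / m)
      have c0 : (1:ℝ) ≤ 1 + D * (4 * β) ^ β + Real.exp (2 * β ^ 2 * v / m) := by linarith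
      have c2 : (1:ℝ) * 1 ≤ (1 + D * (4 * β) ^ β + Real.exp (2 * β ^ 2 * v / m)) * n :=
        mul_le_mul c0 hn1 zero_le_one (by linarith)
      have c3 := mul_le_mul c2 hbig zero_le_one (by nlinarith)
      calc (1:ℝ) = 1 * 1 * 1 := by ring
        _ ≤ _ := c3
    calc P {ω | b < ∑ k ∈ Finset.range n, ζ k ω} ≤ 1 := prob_le_one
      _ = ENNReal.ofReal 1 := by simp
      _ ≤ _ := ENNReal.ofReal_le_ofReal h1
  rcases le_or_gt (n:ℝ) (2 * β) with hcase | hcase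
  · -- few summands: union bound at level b / n
    have hnR : (0:ℝ) < (n:ℝ) := by linarith
    have hsub : {ω | b < ∑ k ∈ Finset.range n, ζ k ω}
        ⊆ ⋃ k ∈ Finset.range n, {ω | b / n < ζ k ω} := by
      intro ω hω
      simp only [Set.mem_setOf_eq] at hω
      by_contra hcon
      simp only [Set.mem_iUnion, Set.mem_setOf_eq, not_exists, not_lt] at hcon
      have hsum : ∑ k ∈ Finset.range n, ζ k ω ≤ ∑ _k ∈ Finset.range n, b / n :=
        Finset.sum_le_sum fun k hk => hcon k hk
      rw [Finset.sum_const, Finset.card_range, nsmul_eq_mul,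
        mul_div_cancel₀ _ hnR.ne'] at hsum
      linarith
    have hthr : m + B4 ≤ b / n := by
      have h1 : m ≤ b / (2 * n) := by
        rw [le_div_iff₀ (by positivity)]; linarith
      have h2 : B4 ≤ b / (2 * n) := by
        rw [hB4_def]
        apply div_le_div_of_nonneg_left hb0.le (by positivity)
        linarith
      have h3 : b / (2 * n) + b / (2 * n) = b / n := by
        field_simp
        ring
      linarith
    calc P {ω | b < ∑ k ∈ Finset.range n, ζ k ω}
        ≤ ∑ k ∈ Finset.range n, P {ω | b / n < ζ k ω} :=
          (measure_mono hsub).trans (measure_biUnion_finset_le _ _)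
      _ ≤ ∑ _k ∈ Finset.range n, ENNReal.ofReal (D / B4 ^ β) :=
          Finset.sum_le_sum fun k _ => hKey _ hthr k
      _ = (n : ENNReal) * ENNReal.ofReal (D / B4 ^ β) := by
          rw [Finset.sum_const, Finset.card_range, nsmul_eq_mul]
      _ = ENNReal.ofReal ((n:ℝ) * (D / B4 ^ β)) := by
          rw [ENNReal.ofReal_mul (by positivity), ENNReal.ofReal_natCast]
      _ ≤ ENNReal.ofReal ((1 + D * (4 * β) ^ β + Real.exp (2 * β ^ 2 * v / m)) * n * b ^ (-β)) := by
          apply ENNReal.ofReal_le_ofReal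
          rw [hDb]
          have h3 := Real.exp_pos (2 * β ^ 2 * v / m)
          have c1 : D * (4 * β) ^ β ≤ 1 + D * (4 * β) ^ β + Real.exp (2 * β ^ 2 * v / m) := by
            linarith
          have c2 : (0:ℝ) ≤ (n:ℝ) * b ^ (-β) := by positivity
          calc (n:ℝ) * (D * (4 * β) ^ β * b ^ (-β))
              = (D * (4 * β) ^ β) * ((n:ℝ) * b ^ (-β)) := by ring
            _ ≤ (1 + D * (4 * β) ^ β + Real.exp (2 * β ^ 2 * v / m)) * ((n:ℝ) * b ^ (-β)) :=
                mul_le_mul_of_nonneg_right c1 c2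
            _ = (1 + D * (4 * β) ^ β + Real.exp (2 * β ^ 2 * v / m)) * n * b ^ (-β) := by ring
  · -- many summands: truncation + Chernoff
    set y := b / (2 * β) with hy_def
    have hy0 : 0 < y := by rw [hy_def]; positivity
    set lam := 2 * β * Real.log b / b with hlam_def
    have hlog0 : 0 ≤ Real.log b := Real.log_nonneg hb1.le
    have hlam0 : 0 ≤ lam := by rw [hlam_def]; positivity
    set Y : ℕ → Ω → ℝ := fun k ω => min (ζ k ω) y with hY_def
    have hYmeas : ∀ k, Measurable (Y k) := fun k => (hmeas k).min measurable_const
    have hYnonneg : ∀ k ω, 0 ≤ Y k ω := fun k ω => le_min (hnonneg k ω) hy0.le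
    have hYley : ∀ k ω, Y k ω ≤ y := fun k ω => min_le_right _ _
    set T : Ω → ℝ := ∑ k ∈ Finset.range n, Y k with hT_def
    have hTapp : ∀ ω, T ω = ∑ k ∈ Finset.range n, Y k ω := by
      intro ω; rw [hT_def]; simp [Finset.sum_apply]
    have hTmeas : Measurable T := by
      have hfe : T = fun ω => ∑ k ∈ Finset.range n, Y k ω := funext hTapp
      rw [hfe]; exact Finset.measurable_sum _ fun k _ => hYmeas k
    have hTle : ∀ ω, T ω ≤ (n:ℝ) * y := by
      intro ω
      rw [hTapp]
      calc ∑ k ∈ Finset.range n, Y k ω ≤ ∑ _k ∈ Finset.range n, y :=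
            Finset.sum_le_sum fun k _ => hYley k ω
        _ = (n:ℝ) * y := by rw [Finset.sum_const, Finset.card_range, nsmul_eq_mul]
    have hIntExpT : Integrable (fun ω => Real.exp (lam * T ω)) P := by
      refine (integrable_const (Real.exp (lam * ((n:ℝ) * y)))).mono'
        ((hTmeas.const_mul lam).exp).aestronglyMeasurable (ae_of_all _ fun ω => ?_)
      rw [Real.norm_eq_abs, Real.abs_exp]
      exact Real.exp_le_exp.mpr (mul_le_mul_of_nonneg_left (hTle ω) hlam0)
    set K := Real.exp (lam * y) - 1 - lam * y with hK_def
    have hK0 : 0 ≤ K := by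
      have := Real.add_one_le_exp (lam * y); rw [hK_def]; linarith
    -- event decomposition
    have hsub : {ω | b < ∑ k ∈ Finset.range n, ζ k ω}
        ⊆ (⋃ k ∈ Finset.range n, {ω | y < ζ k ω}) ∪ {ω | b ≤ T ω} := by
      intro ω hω
      simp only [Set.mem_setOf_eq] at hω
      by_cases hall : ∀ k ∈ Finset.range n, ζ k ω ≤ y
      · right
        have hTeq : T ω = ∑ k ∈ Finset.range n, ζ k ω := by
          rw [hTapp]
          exact Finset.sum_congr rfl fun k hk => min_eq_left (hall k hk)
        simp only [Set.mem_setOf_eq, hTeq]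
        linarith
      · left
        push_neg at hall
        obtain ⟨k, hk, hky⟩ := hall
        exact Set.mem_biUnion hk hky
    -- union part threshold
    have hthr : m + B4 ≤ y := by
      have h1 : m ≤ b / (2 * n) := by
        rw [le_div_iff₀ (by positivity)]; linarith
      have h2 : b / (2 * n) ≤ B4 := by
        rw [hB4_def]
        apply div_le_div_of_nonneg_left hb0.le (by positivity)
        linarith
      have h3 : B4 + B4 = y := by
        rw [hB4_def, hy_def]; field_simp; ring
      linarith
    -- Chernoff part
    have hYindep : iIndepFun Y P :=
      hindep.comp (fun _ x => min x y) fun _ => measurable_id.min measurable_const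
    have hmgfsum : mgf T P lam = ∏ k ∈ Finset.range n, mgf (Y k) P lam := by
      rw [hT_def]; exact hYindep.mgf_sum hYmeas _
    have hmgfeq : ∀ k, mgf (Y k) P lam = mgf (Y 0) P lam := by
      intro k
      have hg : Measurable fun x : ℝ => Real.exp (lam * min x y) :=
        ((measurable_id.min measurable_const).const_mul lam).exp
      show (∫ ω, Real.exp (lam * Y k ω) ∂P) = ∫ ω, Real.exp (lam * Y 0 ω) ∂P
      have h1 : (∫ ω, Real.exp (lam * Y k ω) ∂P)
          = ∫ x, Real.exp (lam * min x y) ∂(P.map (ζ k)) :=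
        (integral_map (hmeas k).aemeasurable hg.aestronglyMeasurable).symm
      have h2 : (∫ ω, Real.exp (lam * Y 0 ω) ∂P)
          = ∫ x, Real.exp (lam * min x y) ∂(P.map (ζ 0)) :=
        (integral_map (hmeas 0).aemeasurable hg.aestronglyMeasurable).symm
      rw [h1, h2, hident k]
    have hY0int : Integrable (Y 0) P := by
      refine (integrable_const y).mono' (hYmeas 0).aestronglyMeasurable
        (ae_of_all _ fun ω => ?_)
      rw [Real.norm_eq_abs, abs_of_nonneg (hYnonneg 0 ω)]
      exact hYley 0 ω
    have hY0sqint : Integrable (fun ω => (Y 0 ω) ^ 2) P := by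
      refine (integrable_const (y ^ 2)).mono'
        (((hYmeas 0).pow_const 2).aestronglyMeasurable) (ae_of_all _ fun ω => ?_)
      rw [Real.norm_eq_abs, abs_of_nonneg (sq_nonneg _)]
      exact pow_le_pow_left₀ (hYnonneg 0 ω) (hYley 0 ω) 2
    have hIntExpY0 : Integrable (fun ω => Real.exp (lam * Y 0 ω)) P := by
      refine (integrable_const (Real.exp (lam * y))).mono'
        (((hYmeas 0).const_mul lam).exp).aestronglyMeasurable (ae_of_all _ fun ω => ?_)
      rw [Real.norm_eq_abs, Real.abs_exp]
      exact Real.exp_le_exp.mpr (mul_le_mul_of_nonneg_left (hYley 0 ω) hlam0)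
    have hEY : ∫ ω, Y 0 ω ∂P ≤ m :=
      integral_mono hY0int hmean_fin fun ω => min_le_left _ _
    have hEYnn : 0 ≤ ∫ ω, Y 0 ω ∂P := integral_nonneg fun ω => hYnonneg 0 ω
    have hEYsq : ∫ ω, (Y 0 ω) ^ 2 ∂P ≤ v :=
      integral_mono hY0sqint hIsq fun ω =>
        pow_le_pow_left₀ (hYnonneg 0 ω) (min_le_left _ _) 2
    have hEYsqnn : 0 ≤ ∫ ω, (Y 0 ω) ^ 2 ∂P := integral_nonneg fun ω => sq_nonneg _
    have hmgf0 : mgf (Y 0) P lam ≤ Real.exp (lam * m + (v / y ^ 2) * K) := by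
      have hpt : ∀ ω, Real.exp (lam * Y 0 ω)
          ≤ 1 + lam * Y 0 ω + (K / y ^ 2) * (Y 0 ω) ^ 2 := by
        intro ω
        have h := aux_exp_quad hlam0 (hYnonneg 0 ω) (hYley 0 ω)
        have e : ((Y 0 ω) ^ 2 / y ^ 2) * (Real.exp (lam * y) - 1 - lam * y)
            = ((Real.exp (lam * y) - 1 - lam * y) / y ^ 2) * (Y 0 ω) ^ 2 := by ring
        rw [hK_def]
        linarith [h, e]
      have hRHSint : Integrable (fun ω => 1 + lam * Y 0 ω + (K / y ^ 2) * (Y 0 ω) ^ 2) P :=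
        ((integrable_const 1).add (hY0int.const_mul lam)).add (hY0sqint.const_mul (K / y ^ 2))
      have h1 : mgf (Y 0) P lam
          ≤ ∫ ω, (1 + lam * Y 0 ω + (K / y ^ 2) * (Y 0 ω) ^ 2) ∂P :=
        integral_mono hIntExpY0 hRHSint hpt
      have hi1 : Integrable (fun ω => 1 + lam * Y 0 ω) P :=
        (integrable_const 1).add (hY0int.const_mul lam)
      have hi2 : Integrable (fun ω => (K / y ^ 2) * (Y 0 ω) ^ 2) P :=
        hY0sqint.const_mul (K / y ^ 2)
      have h2 : ∫ ω, (1 + lam * Y 0 ω + (K / y ^ 2) * (Y 0 ω) ^ 2) ∂P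
          = 1 + lam * (∫ ω, Y 0 ω ∂P) + (K / y ^ 2) * ∫ ω, (Y 0 ω) ^ 2 ∂P := by
        rw [integral_add hi1 hi2,
          integral_add (integrable_const 1) (hY0int.const_mul lam),
          integral_const, integral_const_mul, integral_const_mul]
        simp
      have hKy2 : 0 ≤ K / y ^ 2 := by positivity
      have h3 : 1 + lam * (∫ ω, Y 0 ω ∂P) + (K / y ^ 2) * ∫ ω, (Y 0 ω) ^ 2 ∂P
          ≤ 1 + lam * m + (v / y ^ 2) * K := by
        have e1 : lam * (∫ ω, Y 0 ω ∂P) ≤ lam * m := mul_le_mul_of_nonneg_left hEY hlam0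
        have e2 : (K / y ^ 2) * (∫ ω, (Y 0 ω) ^ 2 ∂P) ≤ (K / y ^ 2) * v :=
          mul_le_mul_of_nonneg_left hEYsq hKy2
        have e3 : (K / y ^ 2) * v = (v / y ^ 2) * K := by ring
        linarith
      have h4 := Real.add_one_le_exp (lam * m + (v / y ^ 2) * K)
      linarith
    have hmgfT : mgf T P lam ≤ Real.exp (lam * m + (v / y ^ 2) * K) ^ n := by
      rw [hmgfsum]
      calc ∏ k ∈ Finset.range n, mgf (Y k) P lam
          = ∏ _k ∈ Finset.range n, mgf (Y 0) P lam :=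
            Finset.prod_congr rfl fun k _ => hmgfeq k
        _ = mgf (Y 0) P lam ^ n := by rw [Finset.prod_const, Finset.card_range]
        _ ≤ _ := pow_le_pow_left₀ mgf_nonneg hmgf0 n
    have hChern : (P {ω | b ≤ T ω}).toReal
        ≤ Real.exp (-lam * b + (n:ℝ) * (lam * m + (v / y ^ 2) * K)) := by
      have h1 := measure_ge_le_exp_mul_mgf (X := T) (μ := P) b hlam0 hIntExpT
      have h2 : Real.exp (-lam * b) * mgf T P lam
          ≤ Real.exp (-lam * b) * Real.exp (lam * m + (v / y ^ 2) * K) ^ n :=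
        mul_le_mul_of_nonneg_left hmgfT (Real.exp_pos _).le
      rw [← Real.exp_nat_mul, ← Real.exp_add] at h2
      exact h1.trans h2
    -- numeric estimate of the exponent
    have hbne : b ≠ 0 := hb0.ne'
    have hβne : β ≠ 0 := hβ0.ne'
    have hlamy : lam * y = Real.log b := by
      rw [hlam_def, hy_def]; field_simp
    have hKval : K = b - 1 - Real.log b := by
      rw [hK_def, hlamy, Real.exp_log hb0]
    have hKleb : K ≤ b := by rw [hKval]; linarith
    have hnb : (n:ℝ) ≤ b / (2 * m) := by
      rw [le_div_iff₀ (by positivity)]; linarith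
    have hy2v : v / y ^ 2 = 4 * β ^ 2 * v / b ^ 2 := by
      rw [hy_def]; field_simp; ring
    have hexp_le : -lam * b + (n:ℝ) * (lam * m + (v / y ^ 2) * K)
        ≤ -(β * Real.log b) + 2 * β ^ 2 * v / m := by
      have e1 : (n:ℝ) * (lam * m) ≤ lam * (b / 2) := by
        have : (n:ℝ) * (lam * m) = lam * ((n:ℝ) * m) := by ring
        rw [this]
        exact mul_le_mul_of_nonneg_left hnm hlam0
      have e2 : (n:ℝ) * ((v / y ^ 2) * K) ≤ (b / (2 * m)) * ((4 * β ^ 2 * v / b ^ 2) * b) := by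
        rw [hy2v]
        apply mul_le_mul hnb (mul_le_mul_of_nonneg_left hKleb (by positivity))
          (by positivity) (by positivity)
      have e3 : (b / (2 * m)) * ((4 * β ^ 2 * v / b ^ 2) * b) = 2 * β ^ 2 * v / m := by
        field_simp; ring
      have e4 : -lam * b + lam * (b / 2) = -(β * Real.log b) := by
        rw [hlam_def]; field_simp; ring
      have e0 : (n:ℝ) * (lam * m + (v / y ^ 2) * K)
          = (n:ℝ) * (lam * m) + (n:ℝ) * ((v / y ^ 2) * K) := by ring
      linarith [e0, e1, e2, e3, e4]
    have hexpb : Real.exp (-(β * Real.log b)) = b ^ (-β) := by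
      rw [Real.rpow_def_of_pos hb0]; ring_nf
    have hChern2 : P {ω | b ≤ T ω}
        ≤ ENNReal.ofReal (Real.exp (2 * β ^ 2 * v / m) * b ^ (-β)) := by
      rw [← ENNReal.ofReal_toReal (measure_ne_top P {ω | b ≤ T ω})]
      apply ENNReal.ofReal_le_ofReal
      calc (P {ω | b ≤ T ω}).toReal
          ≤ Real.exp (-lam * b + (n:ℝ) * (lam * m + (v / y ^ 2) * K)) := hChern
        _ ≤ Real.exp (-(β * Real.log b) + 2 * β ^ 2 * v / m) := Real.exp_le_exp.mpr hexp_le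
        _ = Real.exp (2 * β ^ 2 * v / m) * b ^ (-β) := by
            rw [Real.exp_add, ← hexpb]; ring
    -- assemble
    calc P {ω | b < ∑ k ∈ Finset.range n, ζ k ω}
        ≤ P ((⋃ k ∈ Finset.range n, {ω | y < ζ k ω}) ∪ {ω | b ≤ T ω}) := measure_mono hsub
      _ ≤ P (⋃ k ∈ Finset.range n, {ω | y < ζ k ω}) + P {ω | b ≤ T ω} := measure_union_le _ _
      _ ≤ (∑ k ∈ Finset.range n, P {ω | y < ζ k ω}) + P {ω | b ≤ T ω} := by
          gcongr
          exact measure_biUnion_finset_le _ _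
      _ ≤ (∑ _k ∈ Finset.range n, ENNReal.ofReal (D / B4 ^ β))
          + ENNReal.ofReal (Real.exp (2 * β ^ 2 * v / m) * b ^ (-β)) := by
          have hsum : (∑ k ∈ Finset.range n, P {ω | y < ζ k ω})
              ≤ ∑ _k ∈ Finset.range n, ENNReal.ofReal (D / B4 ^ β) :=
            Finset.sum_le_sum fun k _ => hKey _ hthr k
          exact add_le_add hsum hChern2
      _ = ENNReal.ofReal ((n:ℝ) * (D / B4 ^ β))
          + ENNReal.ofReal (Real.exp (2 * β ^ 2 * v / m) * b ^ (-β)) := by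
          rw [Finset.sum_const, Finset.card_range, nsmul_eq_mul,
            ← ENNReal.ofReal_natCast n, ← ENNReal.ofReal_mul (by positivity)]
      _ ≤ ENNReal.ofReal ((1 + D * (4 * β) ^ β + Real.exp (2 * β ^ 2 * v / m)) * n * b ^ (-β)) := by
          rw [← ENNReal.ofReal_add (by positivity) (by positivity)]
          apply ENNReal.ofReal_le_ofReal
          rw [hDb]
          have h3 := Real.exp_pos (2 * β ^ 2 * v / m)
          have hA : 0 ≤ D * (4 * β) ^ β :=
            mul_nonneg hD0 (Real.rpow_nonneg (by positivity : (0:ℝ) ≤ 4*β) β)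
          have ee : (1 + D * (4 * β) ^ β + Real.exp (2 * β ^ 2 * v / m)) * (n:ℝ) * b ^ (-β)
              = (n:ℝ) * (D * (4 * β) ^ β * b ^ (-β))
                + Real.exp (2 * β ^ 2 * v / m) * b ^ (-β)
                + ((n:ℝ) * b ^ (-β)
                  + Real.exp (2 * β ^ 2 * v / m) * b ^ (-β) * ((n:ℝ) - 1)) := by ring
          have p1 : 0 ≤ (n:ℝ) * b ^ (-β) := by positivity
          have p2 : 0 ≤ Real.exp (2 * β ^ 2 * v / m) * b ^ (-β) * ((n:ℝ) - 1) :=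
            mul_nonneg (mul_nonneg h3.le hbneg0) (by linarith)
          linarith

end
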